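/- Let f : M → M be a C¹ diffeomorphism of a compact manifold with a continuous Df-invariant one-dimensional line bundle E^c, and let μ be an ergodic f-invariant probability measure with central Lyapunov exponent λ_c(f,μ) = ∫ log‖Df|_{E^c}‖ dμ < 0. Set m(f) = min_{x∈M} log‖Df(x)|_{E^c}‖. Then for every ρ with e^{λ_c(f,μ)} < ρ < 1, the set Λ_ρ(f) = { x : ‖Df^n(x)|_{E^c}‖ ≤ ρ^n for all n ≥ 1 } satisfies μ(Λ_ρ(f)) ≥ (log ρ − λ_c(f,μ)) / (log ρ − m(f)) > 0. -/

import Mathlib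

open Finset MeasureTheory
open scoped Classical

/-- Pliss lemma, counting form: downward induction on `n`. Here `S k = ∑_{i<k} b i` and
`H` is the set of "Pliss times" `n < N`, i.e. `S k ≤ S n` for all `k ∈ (n, N]`. -/
lemma pliss_aux (b : ℕ → ℝ) (β : ℝ) (hβ0 : β ≤ 0) (hβ : ∀ i, β ≤ b i) (N : ℕ) :
    ∀ d n, n + d = N → ∀ k, n ≤ k → k ≤ N →
      (∑ i ∈ Finset.range k, b i) - (∑ i ∈ Finset.range N, b i) ≤
        (((((Finset.range N).filter fun m => ∀ k', m < k' → k' ≤ N →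
            (∑ i ∈ Finset.range k', b i) ≤ ∑ i ∈ Finset.range m, b i).filter
              fun j => n ≤ j).card : ℝ)) * (-β) := by
  classical
  set S : ℕ → ℝ := fun k => ∑ i ∈ Finset.range k, b i with hS
  set H : Finset ℕ := (Finset.range N).filter
    (fun m => ∀ k', m < k' → k' ≤ N → S k' ≤ S m) with hH
  have hmono : ∀ n, ((H.filter fun j => n + 1 ≤ j).card : ℝ) ≤
      ((H.filter fun j => n ≤ j).card : ℝ) := by
    intro n
    have hsub : (H.filter fun j => n + 1 ≤ j) ⊆ (H.filter fun j => n ≤ j) := by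
      intro j hj
      simp only [Finset.mem_filter] at hj ⊢
      exact ⟨hj.1, by omega⟩
    exact_mod_cast Finset.card_le_card hsub
  intro d
  induction d with
  | zero =>
    intro n hn k hk1 hk2
    have hkN : k = N := by omega
    subst hkN
    have : 0 ≤ ((H.filter fun j => n ≤ j).card : ℝ) * (-β) := by
      apply mul_nonneg (by positivity) (by linarith)
    simpa using this
  | succ d ih =>
    intro n hn k hk1 hk2
    have hnN : n < N := by omega
    have hstep : ((H.filter fun j => n + 1 ≤ j).card : ℝ) * (-β) ≤
        ((H.filter fun j => n ≤ j).card : ℝ) * (-β) := by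
      apply mul_le_mul_of_nonneg_right (hmono n) (by linarith)
    rcases eq_or_lt_of_le hk1 with rfl | hkn
    · -- n = n
      by_cases hnH : n ∈ H
      · -- n is a Pliss time
        have hins : H.filter (fun j => n ≤ j) =
            insert n (H.filter fun j => n + 1 ≤ j) := by
          ext j
          simp only [Finset.mem_filter, Finset.mem_insert]
          constructor
          · rintro ⟨hj, hnj⟩
            rcases eq_or_lt_of_le hnj with h | h
            · exact Or.inl h.symm
            · exact Or.inr ⟨hj, h⟩
          · rintro (rfl | ⟨hj, hnj⟩)
            · exact ⟨hnH, le_refl _⟩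
            · exact ⟨hj, by omega⟩
        have hcard : ((H.filter fun j => n ≤ j).card : ℝ) =
            ((H.filter fun j => n + 1 ≤ j).card : ℝ) + 1 := by
          rw [hins, Finset.card_insert_of_notMem (by simp)]
          push_cast; ring
        have hIH := ih (n + 1) (by omega) (n + 1) le_rfl (by omega)
        have hSk : S n = S (n + 1) - b n := by
          simp [hS, Finset.sum_range_succ]
        have hb := hβ n
        rw [hcard]
        calc S n - S N = (S (n+1) - S N) + (- b n) := by rw [hSk]; ring
          _ ≤ ((H.filter fun j => n + 1 ≤ j).card : ℝ) * (-β) + (-β) := by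
              linarith
          _ = (((H.filter fun j => n + 1 ≤ j).card : ℝ) + 1) * (-β) := by ring
      · -- n is not a Pliss time: some later k' has bigger S
        have : ¬ (∀ k', n < k' → k' ≤ N → S k' ≤ S n) := by
          intro hcon
          exact hnH (Finset.mem_filter.mpr ⟨Finset.mem_range.mpr hnN, hcon⟩)
        push_neg at this
        obtain ⟨k', hk'1, hk'2, hk'3⟩ := this
        have hIH := ih (n + 1) (by omega) k' (by omega) hk'2
        calc S n - S N ≤ S k' - S N := by linarith
          _ ≤ ((H.filter fun j => n + 1 ≤ j).card : ℝ) * (-β) := hIH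
          _ ≤ _ := hstep
    · -- n < k: use IH directly
      have hIH := ih (n + 1) (by omega) k (by omega) hk2
      exact le_trans hIH hstep

/-- Pliss lemma: lower bound on the number of Pliss times. -/
lemma pliss_count (b : ℕ → ℝ) (β : ℝ) (hβ0 : β ≤ 0) (hβ : ∀ i, β ≤ b i) (N : ℕ) :
    -(∑ i ∈ Finset.range N, b i) ≤
      ((((Finset.range N).filter fun m => ∀ k', m < k' → k' ≤ N →
          (∑ i ∈ Finset.range k', b i) ≤ ∑ i ∈ Finset.range m, b i).card : ℝ)) * (-β) := by
  classical
  have h := pliss_aux b β hβ0 hβ N N 0 (by omega) 0 le_rfl (by omega)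
  simp only [Finset.range_zero, Finset.sum_empty, zero_sub] at h
  have : ((Finset.range N).filter fun m => ∀ k', m < k' → k' ≤ N →
      (∑ i ∈ Finset.range k', b i) ≤ ∑ i ∈ Finset.range m, b i).filter
        (fun j => 0 ≤ j) = ((Finset.range N).filter fun m => ∀ k', m < k' → k' ≤ N →
      (∑ i ∈ Finset.range k', b i) ≤ ∑ i ∈ Finset.range m, b i) := by
    apply Finset.filter_true_of_mem; intro j _; omega
  rwa [this] at h

/-- Pliss-lemma estimate on the measure of `Λ_ρ(f)`: if `μ` is ergodic with negative central
Lyapunov exponent `λ_c = ∫ log c dμ < 0` and `e^{λ_c} < ρ < 1`, then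
`μ(Λ_ρ) ≥ (log ρ − λ_c)/(log ρ − m(f)) > 0`, where `m(f) = min_x log c(x)`.
The norm cocycle of `Df|_{E^c}` is abstracted as the continuous positive function `c`. -/
theorem measure_lambda_rho_lower_bound {M : Type*} [MetricSpace M] [CompactSpace M]
    [MeasurableSpace M] [BorelSpace M]
    (f : M → M) (hf : Continuous f) (c : M → ℝ) (hc : Continuous c) (hcpos : ∀ x, 0 < c x)
    (μ : MeasureTheory.Measure M) [MeasureTheory.IsProbabilityMeasure μ]
    (herg : Ergodic f μ)
    (lamc mf : ℝ) (hlamc : lamc = ∫ x, Real.log (c x) ∂μ) (hneg : lamc < 0)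
    (hmf : IsLeast (Set.range fun x => Real.log (c x)) mf)
    (ρ : ℝ) (hρ : Real.exp lamc < ρ) (hρ1 : ρ < 1) :
    0 < (Real.log ρ - lamc) / (Real.log ρ - mf) ∧
    ENNReal.ofReal ((Real.log ρ - lamc) / (Real.log ρ - mf)) ≤
      μ {x : M | ∀ n, 1 ≤ n → ∏ j ∈ Finset.range n, c (f^[j] x) ≤ ρ ^ n} := by

  classical
  have hρ0 : 0 < ρ := lt_trans (Real.exp_pos lamc) hρ
  set φ : M → ℝ := fun x => Real.log (c x) with hφdef
  have hφcont : Continuous φ := hc.log fun x => (hcpos x).ne'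
  have hcρ : lamc < Real.log ρ := (Real.lt_log_iff_exp_lt hρ0).mpr hρ
  set cρ : ℝ := Real.log ρ with hcρdef
  have hφint : Integrable φ μ :=
    hφcont.integrable_of_hasCompactSupport ((isClosed_tsupport φ).isCompact)
  have hmflam : mf ≤ lamc := by
    rw [hlamc]
    have h := integral_mono (integrable_const mf) hφint fun x => hmf.2 ⟨x, rfl⟩
    simpa using h
  have hD : 0 < cρ - mf := by linarith
  have hA : 0 < cρ - lamc := by linarith
  refine ⟨div_pos hA hD, ?_⟩
  have hmp : MeasurePreserving f μ μ := herg.toMeasurePreserving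
  have hmpk : ∀ k : ℕ, MeasurePreserving f^[k] μ μ := fun k => hmp.iterate k
  have hfk : ∀ k : ℕ, Continuous f^[k] := fun k => hf.iterate k
  set Λ : ℕ → Set M := fun N' =>
    {y | ∀ m, 1 ≤ m → m ≤ N' → ∏ j ∈ Finset.range m, c (f^[j] y) ≤ ρ ^ m} with hΛ
  have hmeas : ∀ N', MeasurableSet (Λ N') := by
    intro N'
    have hrw : Λ N' = ⋂ m : ℕ,
        {y | 1 ≤ m → m ≤ N' → ∏ j ∈ Finset.range m, c (f^[j] y) ≤ ρ ^ m} := by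
      ext y
      simp only [hΛ, Set.mem_setOf_eq, Set.mem_iInter]
    rw [hrw]
    refine MeasurableSet.iInter fun m => ?_
    by_cases h1 : 1 ≤ m ∧ m ≤ N'
    · have : {y : M | 1 ≤ m → m ≤ N' → ∏ j ∈ Finset.range m, c (f^[j] y) ≤ ρ ^ m}
          = {y : M | ∏ j ∈ Finset.range m, c (f^[j] y) ≤ ρ ^ m} := by
        ext y; simp [h1.1, h1.2]
      rw [this]
      have hcont : Continuous fun y => ∏ j ∈ Finset.range m, c (f^[j] y) :=
        continuous_finset_prod _ fun j _ => hc.comp (hfk j)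
      exact measurableSet_le hcont.measurable measurable_const
    · have : {y : M | 1 ≤ m → m ≤ N' → ∏ j ∈ Finset.range m, c (f^[j] y) ≤ ρ ^ m}
          = Set.univ := by
        ext y
        simp only [Set.mem_setOf_eq, Set.mem_univ, iff_true]
        intro ha hb; exact absurd ⟨ha, hb⟩ h1
      rw [this]; exact MeasurableSet.univ
  have hanti : Antitone Λ := fun a b hab y hy m h1 h2 => hy m h1 (h2.trans hab)
  -- Main estimate: for every truncation level `N'`, `θ ≤ μ (Λ N')`.
  have hkey : ∀ N' : ℕ, (cρ - lamc) / (cρ - mf) ≤ (μ (Λ N')).toReal := by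
    intro N'
    set t := (μ (Λ N')).toReal with ht
    have main : ∀ N : ℕ, (N : ℝ) * (cρ - lamc) ≤ (cρ - mf) * ((N : ℝ) * t) + (cρ - mf) * N' := by
      intro N
      -- pointwise counting estimate via the Pliss lemma
      have key : ∀ x : M,
          (N : ℝ) * cρ - (∑ i ∈ Finset.range N, φ (f^[i] x)) - (cρ - mf) * N'
            ≤ (cρ - mf) * ∑ k ∈ Finset.range N, (Λ N').indicator (fun _ => (1:ℝ)) (f^[k] x) := by
        intro x
        set b : ℕ → ℝ := fun i => φ (f^[i] x) - cρ with hb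
        have hβ : ∀ i, (mf - cρ) ≤ b i := by
          intro i
          have := hmf.2 ⟨f^[i] x, rfl⟩
          simp only [hb]
          have : mf ≤ φ (f^[i] x) := this
          linarith
        have hpliss := pliss_count b (mf - cρ) (by linarith) hβ N
        rw [neg_sub] at hpliss
        set H := (Finset.range N).filter (fun m => ∀ k', m < k' → k' ≤ N →
          (∑ i ∈ Finset.range k', b i) ≤ ∑ i ∈ Finset.range m, b i) with hH
        have hmem : ∀ n ∈ H, n + N' ≤ N → f^[n] x ∈ Λ N' := by
          intro n hn hnN'
          intro m h1 h2
          have hSn := (Finset.mem_filter.mp hn).2 (n + m) (by omega) (by omega)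
          have hsplit : ∑ i ∈ Finset.range (n + m), b i
              = ∑ i ∈ Finset.range n, b i + ∑ j ∈ Finset.range m, b (n + j) :=
            Finset.sum_range_add b n m
          have hiter : ∀ j : ℕ, f^[n + j] x = f^[j] (f^[n] x) := by
            intro j
            rw [add_comm, Function.iterate_add_apply]
          have hsum : ∑ j ∈ Finset.range m, φ (f^[j] (f^[n] x)) ≤ m * cρ := by
            have h3 : ∑ j ∈ Finset.range m, b (n + j) ≤ 0 := by linarith [hsplit, hSn]
            have h4 : ∑ j ∈ Finset.range m, b (n + j)
                = (∑ j ∈ Finset.range m, φ (f^[j] (f^[n] x))) - m * cρ := by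
              simp only [hb, hiter, Finset.sum_sub_distrib, Finset.sum_const,
                Finset.card_range, nsmul_eq_mul]
            linarith
          have hprod : ∏ j ∈ Finset.range m, c (f^[j] (f^[n] x))
              = Real.exp (∑ j ∈ Finset.range m, φ (f^[j] (f^[n] x))) := by
            rw [Real.exp_sum]
            exact Finset.prod_congr rfl fun j _ => (Real.exp_log (hcpos _)).symm
          calc ∏ j ∈ Finset.range m, c (f^[j] (f^[n] x))
              = Real.exp (∑ j ∈ Finset.range m, φ (f^[j] (f^[n] x))) := hprod
            _ ≤ Real.exp ((m : ℝ) * cρ) := Real.exp_le_exp.mpr hsum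
            _ = ρ ^ m := by rw [Real.exp_nat_mul, Real.exp_log hρ0]
        set T := (Finset.range N).filter (fun k => f^[k] x ∈ Λ N') with hT
        have hsub : H.filter (fun k => k + N' ≤ N) ⊆ T := by
          intro k hk
          have hk1 := (Finset.mem_filter.mp hk).1
          have hk2 := (Finset.mem_filter.mp hk).2
          have hkr : k ∈ Finset.range N := (Finset.mem_filter.mp hk1).1
          exact Finset.mem_filter.mpr ⟨hkr, hmem k hk1 hk2⟩
        have hc2 : (H.filter (fun k => ¬ (k + N' ≤ N))).card ≤ N' := by
          have hsub2 : (H.filter (fun k => ¬ (k + N' ≤ N))) ⊆ Finset.Ico (N - N') N := by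
            intro k hk
            have hk1 := (Finset.mem_filter.mp hk).1
            have hk2 := (Finset.mem_filter.mp hk).2
            have hkr : k < N := Finset.mem_range.mp (Finset.mem_filter.mp hk1).1
            exact Finset.mem_Ico.mpr ⟨by omega, hkr⟩
          calc (H.filter (fun k => ¬ (k + N' ≤ N))).card
              ≤ (Finset.Ico (N - N') N).card := Finset.card_le_card hsub2
            _ = N - (N - N') := Nat.card_Ico _ _
            _ ≤ N' := by omega
        have hcardHT : H.card ≤ T.card + N' := by
          have heq := Finset.card_filter_add_card_filter_not
            (s := H) (p := fun k => k + N' ≤ N)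
          have h3 := Finset.card_le_card hsub
          omega
        have hindsum : ∑ k ∈ Finset.range N, (Λ N').indicator (fun _ => (1:ℝ)) (f^[k] x)
            = (T.card : ℝ) := by
          rw [hT, ← Finset.sum_boole]
          exact Finset.sum_congr rfl fun k _ => by simp [Set.indicator_apply]
        rw [hindsum]
        have hSN : ∑ i ∈ Finset.range N, b i
            = (∑ i ∈ Finset.range N, φ (f^[i] x)) - N * cρ := by
          simp only [hb, Finset.sum_sub_distrib, Finset.sum_const, Finset.card_range,
            nsmul_eq_mul]
        have hHT : (H.card : ℝ) ≤ (T.card : ℝ) + N' := by exact_mod_cast hcardHT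
        have hmul : (H.card : ℝ) * (cρ - mf) ≤ ((T.card : ℝ) + N') * (cρ - mf) :=
          mul_le_mul_of_nonneg_right hHT (le_of_lt hD)
        rw [hSN] at hpliss
        nlinarith [hpliss, hmul]
      -- integrate the pointwise estimate
      have hindint : ∀ k : ℕ,
          Integrable (fun x => (Λ N').indicator (fun _ => (1:ℝ)) (f^[k] x)) μ := by
        intro k
        have heq : (fun x => (Λ N').indicator (fun _ => (1:ℝ)) (f^[k] x))
            = (f^[k] ⁻¹' (Λ N')).indicator (fun _ => (1:ℝ)) := by
          ext x; simp [Set.indicator_apply, Set.mem_preimage]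
        rw [heq]
        exact (integrable_const (1:ℝ)).indicator ((hfk k).measurable (hmeas N'))
      have hindval : ∀ k : ℕ,
          ∫ x, (Λ N').indicator (fun _ => (1:ℝ)) (f^[k] x) ∂μ = t := by
        intro k
        have heq : (fun x => (Λ N').indicator (fun _ => (1:ℝ)) (f^[k] x))
            = (f^[k] ⁻¹' (Λ N')).indicator (fun _ => (1:ℝ)) := by
          ext x; simp [Set.indicator_apply, Set.mem_preimage]
        rw [heq, MeasureTheory.integral_indicator_const (1:ℝ) ((hfk k).measurable (hmeas N')),
          measureReal_def, (hmpk k).measure_preimage (hmeas N').nullMeasurableSet]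
        simp [ht]
      have hφkint : ∀ k : ℕ, Integrable (fun x => φ (f^[k] x)) μ := fun k =>
        (hφcont.comp (hfk k)).integrable_of_hasCompactSupport ((isClosed_tsupport _).isCompact)
      have hφkval : ∀ k : ℕ, ∫ x, φ (f^[k] x) ∂μ = lamc := by
        intro k
        rw [hlamc]
        rw [← MeasureTheory.integral_map (hfk k).measurable.aemeasurable
          hφcont.aestronglyMeasurable, (hmpk k).map_eq]
      have hGint : Integrable
          (fun x => ∑ k ∈ Finset.range N, (Λ N').indicator (fun _ => (1:ℝ)) (f^[k] x)) μ :=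
        integrable_finset_sum _ fun k _ => hindint k
      have hSint : Integrable (fun x => ∑ i ∈ Finset.range N, φ (f^[i] x)) μ :=
        integrable_finset_sum _ fun i _ => hφkint i
      have hLint : Integrable
          (fun x => (N : ℝ) * cρ - (∑ i ∈ Finset.range N, φ (f^[i] x)) - (cρ - mf) * N') μ :=
        ((integrable_const _).sub hSint).sub (integrable_const _)
      have hle := integral_mono hLint (hGint.const_mul (cρ - mf)) key
      have hLval : ∫ x, ((N : ℝ) * cρ - (∑ i ∈ Finset.range N, φ (f^[i] x)) - (cρ - mf) * N') ∂μ
          = (N : ℝ) * cρ - (N : ℝ) * lamc - (cρ - mf) * N' := by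
        have h1 : ∫ x, ((N : ℝ) * cρ - (∑ i ∈ Finset.range N, φ (f^[i] x)) - (cρ - mf) * N') ∂μ
            = ∫ x, (((N : ℝ) * cρ - (cρ - mf) * N')
                - (∑ i ∈ Finset.range N, φ (f^[i] x))) ∂μ := by
          congr 1; ext x; ring
        rw [h1, integral_sub (integrable_const _) hSint, integral_const,
          integral_finset_sum _ (fun i (_ : i ∈ Finset.range N) => hφkint i)]
        simp only [hφkval, Finset.sum_const, Finset.card_range, measure_univ,
          ENNReal.toReal_one, probReal_univ, one_smul, smul_eq_mul, nsmul_eq_mul]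
        ring
      have hRval : ∫ x, (cρ - mf) *
            (∑ k ∈ Finset.range N, (Λ N').indicator (fun _ => (1:ℝ)) (f^[k] x)) ∂μ
          = (cρ - mf) * ((N : ℝ) * t) := by
        have h2 : ∫ x, (cρ - mf) *
              (∑ k ∈ Finset.range N, (Λ N').indicator (fun _ => (1:ℝ)) (f^[k] x)) ∂μ
            = (cρ - mf) * ∫ x,
              (∑ k ∈ Finset.range N, (Λ N').indicator (fun _ => (1:ℝ)) (f^[k] x)) ∂μ := by
          simpa [smul_eq_mul] using
            integral_smul (μ := μ) (cρ - mf)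
              (fun x => ∑ k ∈ Finset.range N, (Λ N').indicator (fun _ => (1:ℝ)) (f^[k] x))
        rw [h2, integral_finset_sum _ fun k (_ : k ∈ Finset.range N) => hindint k]
        simp only [hindval, Finset.sum_const, Finset.card_range, nsmul_eq_mul]
      rw [hLval, hRval] at hle
      linarith
    -- let N → ∞
    rw [div_le_iff₀ hD]
    by_contra hcon
    push_neg at hcon
    have hδ : 0 < (cρ - lamc) - (cρ - mf) * t := by nlinarith
    obtain ⟨N, hN⟩ := exists_nat_gt (((cρ - mf) * N') / ((cρ - lamc) - (cρ - mf) * t))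
    rw [div_lt_iff₀ hδ] at hN
    have h1 := main N
    nlinarith
  -- conclude by continuity from above
  have hset : {x : M | ∀ n, 1 ≤ n → ∏ j ∈ Finset.range n, c (f^[j] x) ≤ ρ ^ n}
      = ⋂ N', Λ N' := by
    ext y
    simp only [hΛ, Set.mem_setOf_eq, Set.mem_iInter]
    constructor
    · intro h N' m h1 _; exact h m h1
    · intro h m h1; exact h m m h1 le_rfl
  rw [hset, hanti.measure_iInter (fun i => (hmeas i).nullMeasurableSet)
    ⟨0, measure_ne_top μ _⟩]
  exact le_iInf fun N' =>
    (ENNReal.ofReal_le_iff_le_toReal (measure_ne_top μ _)).mpr (hkey N')
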